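/- Let N be a quantum channel on d×d complex matrices, γ a positive-definite density matrix with N(γ) positive definite, θ a real number, and R_γ^θ the rotated Petz recovery map. Fix orthonormal eigenbases γ = ∑_i r_i |i⟩⟨i| and N(γ) = ∑_{k'} r'_{k'} |k'⟩⟨k'| with all r_i, r'_{k'} > 0, and define T_{ij→k'l'} = ⟨k'| N(|i⟩⟨j|) |l'⟩ and T̃^θ_{ij←k'l'} = ⟨i| R_γ^θ(|k'⟩⟨l'|) |j⟩. Then for all indices i, j, k', l': T_{ij→k'l'} = conj(T̃^θ_{ij←k'l'}) · (r'_{k'} r'_{l'} / (r_i r_j))^{1/2} · exp(iθ · log(r_i r'_{l'} / (r_j r'_{k'}))). In particular, the ratio of forward to conjugated backward transition amplitude acquires a phase proportional to the difference of coherence modes ω_{ij} = log r_j − log r_i and ω'_{k'l'} = log r'_{l'} − log r'_{k'}. -/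

import Mathlib

open Matrix
open scoped ComplexOrder

/-- ⟨v|A|w⟩ -/
noncomputable def braket {d : ℕ} (v : Fin d → ℂ) (A : Matrix (Fin d) (Fin d) ℂ)
    (w : Fin d → ℂ) : ℂ :=
  dotProduct (star v) (A.mulVec w)

/-- |v⟩⟨w| -/
noncomputable def ketbra {d : ℕ} (v w : Fin d → ℂ) : Matrix (Fin d) (Fin d) ℂ :=
  Matrix.vecMulVec v (star w)

/-- A quantum channel in Kraus form: N(X) = ∑ m, K m * X * (K m)ᴴ. -/
noncomputable def krausMap {d : ℕ} {ι : Type} [Fintype ι] (K : ι → Matrix (Fin d) (Fin d) ℂ)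
    (X : Matrix (Fin d) (Fin d) ℂ) : Matrix (Fin d) (Fin d) ℂ :=
  ∑ m, K m * X * (K m)ᴴ

/-- The adjoint map: N†(X) = ∑ m, (K m)ᴴ * X * K m. -/
noncomputable def krausAdj {d : ℕ} {ι : Type} [Fintype ι] (K : ι → Matrix (Fin d) (Fin d) ℂ)
    (X : Matrix (Fin d) (Fin d) ℂ) : Matrix (Fin d) (Fin d) ℂ :=
  ∑ m, (K m)ᴴ * X * K m

/-- An orthonormal family of vectors in ℂ^d. -/
def IsONB {d : ℕ} (e : Fin d → Fin d → ℂ) : Prop :=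
  ∀ i j, dotProduct (star (e i)) (e j) = if i = j then 1 else 0

/-- For A = ∑ i, r i • |e i⟩⟨e i| with `e` orthonormal and `r` positive, the complex
matrix power A^z = exp (z log A) is given by A^z = ∑ i, (r i)^z • |e i⟩⟨e i|. -/
noncomputable def projPow {d : ℕ} (r : Fin d → ℝ) (e : Fin d → Fin d → ℂ) (z : ℂ) :
    Matrix (Fin d) (Fin d) ℂ :=
  ∑ i, ((r i : ℂ) ^ z) • ketbra (e i) (e i)

/-- The rotated Petz recovery map, expressed through the eigendecompositions
γ = ∑ r_i |i⟩⟨i| and N(γ) = ∑ r'_k |k'⟩⟨k'|: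
R_γ^θ(X) = γ^{1/2+iθ} N†(N(γ)^{-1/2-iθ} X N(γ)^{-1/2+iθ}) γ^{1/2-iθ}. -/
noncomputable def rotPetzB {d : ℕ} {ι : Type} [Fintype ι] (K : ι → Matrix (Fin d) (Fin d) ℂ)
    (r : Fin d → ℝ) (e : Fin d → Fin d → ℂ) (r' : Fin d → ℝ) (f : Fin d → Fin d → ℂ)
    (θ : ℝ) (X : Matrix (Fin d) (Fin d) ℂ) : Matrix (Fin d) (Fin d) ℂ :=
  projPow r e (1/2 + θ * Complex.I) *
    krausAdj K (projPow r' f (-(1/2) - θ * Complex.I) * X *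
      projPow r' f (-(1/2) + θ * Complex.I)) *
    projPow r e (1/2 - θ * Complex.I)
section helpers
variable {d : ℕ}

lemma star_dot (u v : Fin d → ℂ) :
    dotProduct (star u) v = star (dotProduct (star v) u) := by
  simp [dotProduct, star_sum, mul_comm]

lemma braket_smul (v w : Fin d → ℂ) (c : ℂ) (A : Matrix (Fin d) (Fin d) ℂ) :
    braket v (c • A) w = c * braket v A w := by
  simp [braket, Matrix.smul_mulVec, mul_comm, mul_left_comm]

lemma sum_mulVec' {ι : Type*} [Fintype ι] (A : ι → Matrix (Fin d) (Fin d) ℂ) (w : Fin d → ℂ) :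
    (∑ m, A m).mulVec w = ∑ m, (A m).mulVec w := by
  ext x
  simp only [Matrix.mulVec, dotProduct, Matrix.sum_apply, Finset.sum_apply,
    Finset.sum_mul]
  exact Finset.sum_comm

lemma dot_sum {ι : Type*} [Fintype ι] (v : Fin d → ℂ) (u : ι → Fin d → ℂ) :
    dotProduct v (∑ m, u m) = ∑ m, dotProduct v (u m) := by
  simp only [dotProduct, Finset.sum_apply, Finset.mul_sum]
  exact Finset.sum_comm

lemma braket_sum {ι : Type*} [Fintype ι] (v w : Fin d → ℂ) (A : ι → Matrix (Fin d) (Fin d) ℂ) :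
    braket v (∑ m, A m) w = ∑ m, braket v (A m) w := by
  rw [braket, sum_mulVec', dot_sum]; rfl

lemma mul_ketbra_mul (A B : Matrix (Fin d) (Fin d) ℂ) (v w : Fin d → ℂ) :
    A * ketbra v w * B = ketbra (A.mulVec v) (Bᴴ.mulVec w) := by
  ext i j
  simp only [ketbra, Matrix.mul_apply, Matrix.vecMulVec_apply, Matrix.mulVec,
    dotProduct, Matrix.conjTranspose_apply, Pi.star_apply, star_sum, star_mul', star_star,
    Finset.sum_mul, Finset.mul_sum]
  refine Finset.sum_congr rfl fun b _ => Finset.sum_congr rfl fun a _ => by ring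

lemma braket_ketbra (u v w x : Fin d → ℂ) :
    braket u (ketbra v w) x = dotProduct (star u) v * dotProduct (star w) x := by
  simp only [braket, ketbra, Matrix.mulVec, dotProduct, Matrix.vecMulVec_apply,
    Pi.star_apply, Finset.mul_sum, Finset.sum_mul]
  rw [Finset.sum_comm]
  refine Finset.sum_congr rfl fun b _ => Finset.sum_congr rfl fun a _ => by ring

lemma ketbra_mul_ketbra (v w x y : Fin d → ℂ) :
    ketbra v w * ketbra x y = dotProduct (star w) x • ketbra v y := by
  ext i j
  simp only [ketbra, Matrix.mul_apply, Matrix.vecMulVec_apply, Matrix.smul_apply,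
    Pi.star_apply, dotProduct, smul_eq_mul, Finset.sum_mul, Finset.mul_sum]
  refine Finset.sum_congr rfl fun a _ => by ring

end helpers
section helpers2
variable {d : ℕ} {r : Fin d → ℝ} {e : Fin d → Fin d → ℂ}

lemma star_braket (v w : Fin d → ℂ) (A : Matrix (Fin d) (Fin d) ℂ) :
    star (braket v A w) = braket w Aᴴ v := by
  simp only [braket, Matrix.mulVec, dotProduct, Matrix.conjTranspose_apply,
    Pi.star_apply, star_sum, star_mul', star_star, Finset.mul_sum, Finset.sum_mul]
  rw [Finset.sum_comm]
  refine Finset.sum_congr rfl fun b _ => Finset.sum_congr rfl fun a _ => by ring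

lemma projPow_mul_ketbra (he : IsONB e) (z : ℂ) (k : Fin d) (w : Fin d → ℂ) :
    projPow r e z * ketbra (e k) w = ((r k : ℂ) ^ z) • ketbra (e k) w := by
  rw [projPow, Finset.sum_mul]
  have : ∀ a : Fin d, ((r a : ℂ) ^ z) • ketbra (e a) (e a) * ketbra (e k) w
      = if a = k then ((r k : ℂ) ^ z) • ketbra (e k) w else 0 := by
    intro a
    rw [Matrix.smul_mul, ketbra_mul_ketbra, he a k]
    by_cases h : a = k <;> simp [h]
  simp only [this, Finset.sum_ite_eq', Finset.mem_univ, if_true]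

lemma ketbra_mul_projPow (he : IsONB e) (z : ℂ) (l : Fin d) (v : Fin d → ℂ) :
    ketbra v (e l) * projPow r e z = ((r l : ℂ) ^ z) • ketbra v (e l) := by
  rw [projPow, Finset.mul_sum]
  have : ∀ a : Fin d, ketbra v (e l) * (((r a : ℂ) ^ z) • ketbra (e a) (e a))
      = if a = l then ((r l : ℂ) ^ z) • ketbra v (e l) else 0 := by
    intro a
    rw [Matrix.mul_smul, ketbra_mul_ketbra, he l a]
    by_cases h : a = l
    · simp [h]
    · simp [h, show l ≠ a from fun hh => h hh.symm]
  simp only [this, Finset.sum_ite_eq', Finset.mem_univ, if_true]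

lemma braket_projPow_mul (he : IsONB e) (z : ℂ) (i : Fin d) (M : Matrix (Fin d) (Fin d) ℂ)
    (w : Fin d → ℂ) :
    braket (e i) (projPow r e z * M) w = ((r i : ℂ) ^ z) * braket (e i) M w := by
  have h1 : projPow r e z * M = ∑ a, ((r a : ℂ) ^ z) • (ketbra (e a) (e a) * M) := by
    rw [projPow, Finset.sum_mul]; simp [Matrix.smul_mul]
  rw [h1, braket_sum]
  have : ∀ a : Fin d, braket (e i) (((r a : ℂ) ^ z) • (ketbra (e a) (e a) * M)) w
      = if a = i then ((r i : ℂ) ^ z) * braket (e i) M w else 0 := by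
    intro a
    rw [braket_smul]
    have h2 : ketbra (e a) (e a) * M = ketbra (e a) (Mᴴ.mulVec (e a)) := by
      have := mul_ketbra_mul (1 : Matrix (Fin d) (Fin d) ℂ) M (e a) (e a)
      simpa using this
    rw [h2, braket_ketbra, he i a]
    by_cases h : a = i
    · subst h
      simp only [if_true, one_mul]
      congr 1
      rw [star_dot, show star w ⬝ᵥ Mᴴ *ᵥ e a = braket w Mᴴ (e a) from rfl,
        star_braket, Matrix.conjTranspose_conjTranspose]
    · simp [h, Ne.symm h, eq_comm]
  simp only [this, Finset.sum_ite_eq', Finset.mem_univ, if_true]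

lemma braket_mul_projPow (he : IsONB e) (z : ℂ) (j : Fin d) (M : Matrix (Fin d) (Fin d) ℂ)
    (v : Fin d → ℂ) :
    braket v (M * projPow r e z) (e j) = ((r j : ℂ) ^ z) * braket v M (e j) := by
  have h1 : M * projPow r e z = ∑ a, ((r a : ℂ) ^ z) • (M * ketbra (e a) (e a)) := by
    rw [projPow, Finset.mul_sum]; simp [Matrix.mul_smul]
  rw [h1, braket_sum]
  have : ∀ a : Fin d, braket v (((r a : ℂ) ^ z) • (M * ketbra (e a) (e a))) (e j)
      = if a = j then ((r j : ℂ) ^ z) * braket v M (e j) else 0 := by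
    intro a
    rw [braket_smul]
    have h2 : M * ketbra (e a) (e a) = ketbra (M.mulVec (e a)) (e a) := by
      have := mul_ketbra_mul M (1 : Matrix (Fin d) (Fin d) ℂ) (e a) (e a)
      simpa using this
    rw [h2, braket_ketbra, he a j]
    by_cases h : a = j
    · subst h; simp [braket]
    · simp [h]
  simp only [this, Finset.sum_ite_eq', Finset.mem_univ, if_true]

lemma cpow_pos_exp {x : ℝ} (hx : 0 < x) (z : ℂ) :
    (x : ℂ) ^ z = Complex.exp (z * (Real.log x : ℂ)) := by
  rw [Complex.cpow_def_of_ne_zero (by exact_mod_cast hx.ne'), ← Complex.ofReal_log hx.le,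
    mul_comm]

end helpers2
/-- forward and rotated-backward transition amplitudes satisfy
T_{ij→k'l'} = conj(T̃^θ_{ij←k'l'}) √(r'_k r'_l/(r_i r_j)) exp(iθ log(r_i r'_l/(r_j r'_k))). -/
theorem rotated_quantum_information_exchange
    {d : ℕ} {ι : Type} [Fintype ι] (K : ι → Matrix (Fin d) (Fin d) ℂ)
    (hK : ∑ m, (K m)ᴴ * K m = 1)
    (r : Fin d → ℝ) (e : Fin d → Fin d → ℂ) (hr : ∀ i, 0 < r i) (he : IsONB e)
    (hrtr : ∑ i, r i = 1)
    (r' : Fin d → ℝ) (f : Fin d → Fin d → ℂ) (hr' : ∀ k, 0 < r' k) (hf : IsONB f)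
    (hNγ : krausMap K (∑ i, ((r i : ℂ)) • ketbra (e i) (e i)) =
      ∑ k, ((r' k : ℂ)) • ketbra (f k) (f k))
    (θ : ℝ) :
    ∀ i j k l : Fin d,
      braket (f k) (krausMap K (ketbra (e i) (e j))) (f l) =
        (starRingEnd ℂ) (braket (e i) (rotPetzB K r e r' f θ (ketbra (f k) (f l))) (e j)) *
          (Real.sqrt (r' k * r' l / (r i * r j)) : ℂ) *
          Complex.exp ((θ : ℂ) * Complex.I * (Real.log (r i * r' l / (r j * r' k)) : ℝ)) := by
  intro i j k l
  set z1 : ℂ := 1/2 + (θ:ℂ) * Complex.I with hz1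
  set z2 : ℂ := 1/2 - (θ:ℂ) * Complex.I with hz2
  set w1 : ℂ := -(1/2) - (θ:ℂ) * Complex.I with hw1
  set w2 : ℂ := -(1/2) + (θ:ℂ) * Complex.I with hw2
  -- LHS
  have hL : braket (f k) (krausMap K (ketbra (e i) (e j))) (f l)
      = ∑ m, braket (f k) (K m) (e i) * star (braket (f l) (K m) (e j)) := by
    rw [krausMap, braket_sum]
    refine Finset.sum_congr rfl fun m _ => ?_
    rw [mul_ketbra_mul, braket_ketbra, Matrix.conjTranspose_conjTranspose]
    congr 1
    rw [star_dot]
    rfl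
  -- sandwich
  set c : ℂ := (r' k : ℂ) ^ w1 * (r' l : ℂ) ^ w2 with hc
  have hsand : projPow r' f w1 * ketbra (f k) (f l) * projPow r' f w2
      = c • ketbra (f k) (f l) := by
    rw [projPow_mul_ketbra hf, Matrix.smul_mul, ketbra_mul_projPow hf, smul_smul]
  have hadj : krausAdj K (c • ketbra (f k) (f l))
      = ∑ m, c • ketbra ((K m)ᴴ.mulVec (f k)) ((K m)ᴴ.mulVec (f l)) := by
    simp only [krausAdj, Matrix.mul_smul, Matrix.smul_mul, mul_ketbra_mul]
  have hT : braket (e i) (rotPetzB K r e r' f θ (ketbra (f k) (f l))) (e j)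
      = (r j : ℂ) ^ z2 * ((r i : ℂ) ^ z1 *
          ∑ m, c * (star (braket (f k) (K m) (e i)) * braket (f l) (K m) (e j))) := by
    rw [rotPetzB, braket_mul_projPow he, braket_projPow_mul he, hsand, hadj, braket_sum]
    congr 2
    refine Finset.sum_congr rfl fun m _ => ?_
    rw [braket_smul, braket_ketbra]
    congr 1
    congr 1
    · rw [show star (e i) ⬝ᵥ (K m)ᴴ *ᵥ f k = braket (e i) (K m)ᴴ (f k) from rfl,
        ← star_braket]
    · rw [star_dot, show star (e j) ⬝ᵥ (K m)ᴴ *ᵥ f l = braket (e j) (K m)ᴴ (f l) from rfl,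
        ← star_braket, star_star]
  rw [hL, hT]
  -- pull out conjugates
  simp only [_root_.map_mul, map_sum, starRingEnd_apply, star_star, Finset.mul_sum]
  have hfac : (∑ x : ι, star ((r j:ℂ)^z2) * (star ((r i:ℂ)^z1) *
        (star c * (braket (f k) (K x) (e i) * star (braket (f l) (K x) (e j))))))
      = star ((r j:ℂ)^z2) * star ((r i:ℂ)^z1) * star c *
        ∑ m, braket (f k) (K m) (e i) * star (braket (f l) (K m) (e j)) := by
    rw [Finset.mul_sum]; exact Finset.sum_congr rfl fun m _ => by ring
  rw [hfac]
  have hX : (0:ℝ) < r' k * r' l / (r i * r j) :=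
    div_pos (mul_pos (hr' k) (hr' l)) (mul_pos (hr i) (hr j))
  have hsqrt : ((Real.sqrt (r' k * r' l / (r i * r j)) : ℝ) : ℂ)
      = Complex.exp (((Real.log (r' k * r' l / (r i * r j)) * (1/2) : ℝ) : ℂ)) := by
    rw [Real.sqrt_eq_rpow, Real.rpow_def_of_pos hX, Complex.ofReal_exp]
  have hlog1 : Real.log (r' k * r' l / (r i * r j))
      = Real.log (r' k) + Real.log (r' l) - (Real.log (r i) + Real.log (r j)) := by
    rw [Real.log_div (mul_pos (hr' k) (hr' l)).ne' (mul_pos (hr i) (hr j)).ne',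
      Real.log_mul (hr' k).ne' (hr' l).ne', Real.log_mul (hr i).ne' (hr j).ne']
  have hlog2 : Real.log (r i * r' l / (r j * r' k))
      = Real.log (r i) + Real.log (r' l) - (Real.log (r j) + Real.log (r' k)) := by
    rw [Real.log_div (mul_pos (hr i) (hr' l)).ne' (mul_pos (hr j) (hr' k)).ne',
      Real.log_mul (hr i).ne' (hr' l).ne', Real.log_mul (hr j).ne' (hr' k).ne']
  have star_cpow_pos : ∀ {x : ℝ}, 0 < x → ∀ z : ℂ,
      star ((x:ℂ)^z) = Complex.exp ((starRingEnd ℂ z) * (Real.log x : ℂ)) := by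
    intro x hx z
    rw [cpow_pos_exp hx,
      show star (Complex.exp (z * (Real.log x : ℂ))) =
        (starRingEnd ℂ) (Complex.exp (z * (Real.log x : ℂ))) from rfl,
      ← Complex.exp_conj, _root_.map_mul, Complex.conj_ofReal]
  have hF : star ((r j:ℂ)^z2) * star ((r i:ℂ)^z1) * star c *
        ((Real.sqrt (r' k * r' l / (r i * r j)) : ℝ) : ℂ) *
        Complex.exp ((θ:ℂ) * Complex.I * (Real.log (r i * r' l / (r j * r' k)) : ℝ)) = 1 := by
    rw [hc, star_mul', star_cpow_pos (hr' k), star_cpow_pos (hr' l),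
      star_cpow_pos (hr j), star_cpow_pos (hr i), hsqrt]
    simp only [← Complex.exp_add]
    rw [← Complex.exp_zero]
    congr 1
    rw [hlog1, hlog2]
    simp only [hz1, hz2, hw1, hw2, map_add, map_sub, map_neg, _root_.map_mul, map_div₀,
      _root_.map_one, map_ofNat, Complex.conj_I, Complex.conj_ofReal]
    push_cast
    ring
  linear_combination (-(∑ m, braket (f k) (K m) (e i) * star (braket (f l) (K m) (e j)))) * hF
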